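/- Exact variational characterization of the SIM for the Davis–Skodje model: let γ > 1 and let z be a solution of the Davis–Skodje model of the form z₁(t) = c₁·e^{−t}, z₂(t) = c₂·e^{−γt} + c₁/(c₁+e^{t}) with c₁ ≥ 0. Then for all t, the Lagrangian-type integrand satisfies ‖∂_t z(t)‖₂² − (γ/(1+z₁(t)))·‖z(t)‖₂² = F₀(t) + (γ² − γ/(1+z₁(t)))·c₂²·e^{−2γt}, where F₀(t) is the corresponding value for the solution with the same c₁ and c₂ = 0, and γ² − γ/(1+z₁(t)) ≥ γ(γ−1) > 0. Consequently, for any t₀ < t_f and a ≥ 0, among all such solutions with z₁(t_f) = a, the functional ∫_{t₀}^{t_f} (‖∂_t z(t)‖₂² − (γ/(1+z₁(t)))·‖z(t)‖₂²) dt is uniquely minimized by the solution with c₂ = 0, which lies on the SIM z₂ = z₁/(1+z₁). -/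

import Mathlib

open Real

lemma hd1 (c₁ t : ℝ) : deriv (fun s => c₁ * Real.exp (-s)) t = -(c₁ * Real.exp (-t)) := by
  have h : HasDerivAt (fun s : ℝ => c₁ * Real.exp (-s)) (-(c₁ * Real.exp (-t))) t := by
    have h1 : HasDerivAt (fun s : ℝ => Real.exp (-s)) (Real.exp (-t) * (-1)) t :=
      (Real.hasDerivAt_exp (-t)).comp t (hasDerivAt_neg t)
    simpa [mul_comm, mul_assoc, mul_left_comm] using h1.const_mul c₁
  exact h.deriv

lemma hd2 (γ c₁ c₂ t : ℝ) (hc : 0 ≤ c₁) :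
    deriv (fun s => c₂ * Real.exp (-γ * s) + c₁ / (c₁ + Real.exp s)) t
      = -(γ * c₂ * Real.exp (-γ * t)) - c₁ * Real.exp t / (c₁ + Real.exp t) ^ 2 := by
  have hne : c₁ + Real.exp t ≠ 0 := by positivity
  have h1 : HasDerivAt (fun s : ℝ => c₂ * Real.exp (-γ * s)) (-(γ * c₂ * Real.exp (-γ * t))) t := by
    have := (Real.hasDerivAt_exp (-γ * t)).comp t ((hasDerivAt_id t).const_mul (-γ))
    simpa [mul_comm, mul_assoc, mul_left_comm] using this.const_mul c₂
  have h2 : HasDerivAt (fun s : ℝ => c₁ / (c₁ + Real.exp s))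
      (-(c₁ * Real.exp t) / (c₁ + Real.exp t) ^ 2) t := by
    have : HasDerivAt (fun s : ℝ => c₁ / (c₁ + Real.exp s))
        ((0 * (c₁ + Real.exp t) - c₁ * (0 + Real.exp t)) / (c₁ + Real.exp t) ^ 2) t :=
      (hasDerivAt_const t c₁).div ((hasDerivAt_const t c₁).add (Real.hasDerivAt_exp t)) hne
    convert this using 1
    ring
  have := h1.add h2
  have h3 : HasDerivAt (fun s => c₂ * Real.exp (-γ * s) + c₁ / (c₁ + Real.exp s))
      (-(γ * c₂ * Real.exp (-γ * t)) + -(c₁ * Real.exp t) / (c₁ + Real.exp t) ^ 2) t := this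
  rw [h3.deriv]; ring

lemma exp2 (γ t : ℝ) : Real.exp (-2 * γ * t) = Real.exp (-γ * t) * Real.exp (-γ * t) := by
  rw [← Real.exp_add]; ring_nf

noncomputable def dsLagrangian (γ c₁ c₂ t : ℝ) : ℝ :=
  (deriv (fun s => c₁ * Real.exp (-s)) t) ^ 2
    + (deriv (fun s => c₂ * Real.exp (-γ * s) + c₁ / (c₁ + Real.exp s)) t) ^ 2
    - (γ / (1 + c₁ * Real.exp (-t)))
        * ((c₁ * Real.exp (-t)) ^ 2
            + (c₂ * Real.exp (-γ * t) + c₁ / (c₁ + Real.exp t)) ^ 2)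

/-- The functional ∫_{t₀}^{t_f} (‖∂_t z‖₂² − (γ/(1+z₁))·‖z‖₂²) dt for the
Davis–Skodje solution with constants c₁, c₂. -/
noncomputable def dsFunctional (γ t₀ tf c₁ c₂ : ℝ) : ℝ :=
  ∫ t in t₀..tf, dsLagrangian γ c₁ c₂ t

lemma key_eq (γ c₁ : ℝ) (hc : 0 ≤ c₁) (c₂ t : ℝ) :
    dsLagrangian γ c₁ c₂ t
      = dsLagrangian γ c₁ 0 t
        + (γ ^ 2 - γ / (1 + c₁ * Real.exp (-t))) * c₂ ^ 2 * Real.exp (-2 * γ * t) := by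
  have hE : Real.exp (-t) = (Real.exp t)⁻¹ := Real.exp_neg t
  have hx : (0:ℝ) < Real.exp t := Real.exp_pos t
  have hne : c₁ + Real.exp t ≠ 0 := by positivity
  have hne2 : 1 + c₁ * Real.exp (-t) ≠ 0 := by positivity
  unfold dsLagrangian
  rw [hd1, hd2 _ _ _ _ hc, hd2 _ _ _ _ hc, exp2]
  rw [hE] at *
  field_simp
  ring

lemma lb (γ : ℝ) (hγ : 1 < γ) (c₁ t : ℝ) (hc : 0 ≤ c₁) :
    γ * (γ - 1) ≤ γ ^ 2 - γ / (1 + c₁ * Real.exp (-t)) := by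
  have h1 : (1:ℝ) ≤ 1 + c₁ * Real.exp (-t) := by nlinarith [mul_nonneg hc (Real.exp_pos (-t)).le]
  have hγ0 : (0:ℝ) < γ := by linarith
  have : γ / (1 + c₁ * Real.exp (-t)) ≤ γ := by
    rw [div_le_iff₀ (by linarith)]
    nlinarith
  nlinarith

lemma dsL0 (γ c₁ : ℝ) (hc : 0 ≤ c₁) : (fun t => dsLagrangian γ c₁ 0 t)
    = fun t => (-(c₁ * Real.exp (-t))) ^ 2
        + (-(γ * 0 * Real.exp (-γ * t)) - c₁ * Real.exp t / (c₁ + Real.exp t) ^ 2) ^ 2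
        - (γ / (1 + c₁ * Real.exp (-t)))
            * ((c₁ * Real.exp (-t)) ^ 2 + (0 * Real.exp (-γ * t) + c₁ / (c₁ + Real.exp t)) ^ 2) := by
  funext t; unfold dsLagrangian; rw [hd1, hd2 _ _ _ _ hc]

lemma cont_aux1 (c₁ : ℝ) (hc : 0 ≤ c₁) : ∀ t : ℝ, c₁ + Real.exp t ≠ 0 := fun t => by positivity

lemma cont_aux2 (c₁ : ℝ) (hc : 0 ≤ c₁) : ∀ t : ℝ, 1 + c₁ * Real.exp (-t) ≠ 0 := fun t => by positivity

lemma contexp (b : ℝ) : Continuous fun t : ℝ => Real.exp (b * t) :=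
  Real.continuous_exp.comp (continuous_const.mul continuous_id)

lemma contexpneg : Continuous fun t : ℝ => Real.exp (-t) :=
  Real.continuous_exp.comp continuous_neg

lemma contden2 (c₁ : ℝ) : Continuous fun t : ℝ => 1 + c₁ * Real.exp (-t) :=
  continuous_const.add (continuous_const.mul contexpneg)

lemma cont0 (γ c₁ : ℝ) (hc : 0 ≤ c₁) : Continuous (fun t => dsLagrangian γ c₁ 0 t) := by
  rw [dsL0 γ c₁ hc]
  have h1 : ∀ t : ℝ, (c₁ + Real.exp t) ^ 2 ≠ 0 := fun t => pow_ne_zero _ (cont_aux1 c₁ hc t)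
  have hden1 : Continuous fun t : ℝ => c₁ + Real.exp t := continuous_const.add Real.continuous_exp
  have cA : Continuous fun t : ℝ => -(c₁ * Real.exp (-t)) := (continuous_const.mul contexpneg).neg
  have cB : Continuous fun t : ℝ =>
      -(γ * 0 * Real.exp (-γ * t)) - c₁ * Real.exp t / (c₁ + Real.exp t) ^ 2 :=
    ((continuous_const.mul (contexp (-γ))).neg).sub
      ((continuous_const.mul Real.continuous_exp).div (hden1.pow 2) h1)
  have cC : Continuous fun t : ℝ => γ / (1 + c₁ * Real.exp (-t)) :=
    continuous_const.div (contden2 c₁) (cont_aux2 c₁ hc)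
  have cD : Continuous fun t : ℝ =>
      (c₁ * Real.exp (-t)) ^ 2 + (0 * Real.exp (-γ * t) + c₁ / (c₁ + Real.exp t)) ^ 2 :=
    ((continuous_const.mul contexpneg).pow 2).add
      (((continuous_const.mul (contexp (-γ))).add
        (continuous_const.div hden1 (cont_aux1 c₁ hc))).pow 2)
  exact ((cA.pow 2).add (cB.pow 2)).sub (cC.mul cD)

lemma contg (γ c₁ : ℝ) (hc : 0 ≤ c₁) :
    Continuous (fun t => (γ ^ 2 - γ / (1 + c₁ * Real.exp (-t))) * Real.exp (-2 * γ * t)) :=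
  ((continuous_const.sub (continuous_const.div (contden2 c₁) (cont_aux2 c₁ hc))).mul
    (contexp (-2 * γ)))

lemma gpos (γ : ℝ) (hγ : 1 < γ) (c₁ : ℝ) (hc : 0 ≤ c₁) (t : ℝ) :
    0 < (γ ^ 2 - γ / (1 + c₁ * Real.exp (-t))) * Real.exp (-2 * γ * t) := by
  have h := lb γ hγ c₁ t hc
  have : 0 < γ * (γ - 1) := by nlinarith
  have he := Real.exp_pos (-2 * γ * t)
  nlinarith

theorem stmt11 (γ : ℝ) (hγ : 1 < γ) :
    (∀ c₁ : ℝ, 0 ≤ c₁ → ∀ c₂ t : ℝ,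
      dsLagrangian γ c₁ c₂ t
        = dsLagrangian γ c₁ 0 t
          + (γ ^ 2 - γ / (1 + c₁ * exp (-t))) * c₂ ^ 2 * exp (-2 * γ * t) ∧
      γ * (γ - 1) ≤ γ ^ 2 - γ / (1 + c₁ * exp (-t)) ∧
      0 < γ * (γ - 1)) ∧
    (∀ t₀ tf : ℝ, t₀ < tf → ∀ a : ℝ, 0 ≤ a →
      (∀ c₁ c₂ : ℝ, 0 ≤ c₁ → c₁ * exp (-tf) = a →
        dsFunctional γ t₀ tf (a * exp tf) 0 ≤ dsFunctional γ t₀ tf c₁ c₂ ∧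
        (dsFunctional γ t₀ tf c₁ c₂ = dsFunctional γ t₀ tf (a * exp tf) 0 ↔
          c₂ = 0)) ∧
      (∀ t : ℝ,
        (0 : ℝ) * exp (-γ * t) + (a * exp tf) / (a * exp tf + exp t)
          = (a * exp tf * exp (-t)) / (1 + a * exp tf * exp (-t)))) := by
  have hγ0 : (0:ℝ) < γ := by linarith
  constructor
  · intro c₁ hc c₂ t
    exact ⟨key_eq γ c₁ hc c₂ t, lb γ hγ c₁ t hc, by nlinarith⟩
  · intro t₀ tf hlt a ha
    constructor
    · intro c₁ c₂ hc hcf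
      have hc₁ : a * exp tf = c₁ := by
        rw [← hcf, mul_assoc, ← Real.exp_add]; simp
      rw [hc₁]
      set g : ℝ → ℝ := fun t => (γ ^ 2 - γ / (1 + c₁ * Real.exp (-t))) * Real.exp (-2 * γ * t)
        with hg
      have hint0 : IntervalIntegrable (fun t => dsLagrangian γ c₁ 0 t) MeasureTheory.volume t₀ tf :=
        (cont0 γ c₁ hc).intervalIntegrable t₀ tf
      have hintg : IntervalIntegrable (fun t => c₂ ^ 2 * g t) MeasureTheory.volume t₀ tf :=
        (continuous_const.mul (contg γ c₁ hc)).intervalIntegrable t₀ tf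
      have hsplit : dsFunctional γ t₀ tf c₁ c₂
          = dsFunctional γ t₀ tf c₁ 0 + c₂ ^ 2 * ∫ t in t₀..tf, g t := by
        unfold dsFunctional
        have : (fun t => dsLagrangian γ c₁ c₂ t)
            = fun t => dsLagrangian γ c₁ 0 t + c₂ ^ 2 * g t := by
          funext t; rw [key_eq γ c₁ hc c₂ t, hg]; ring
        rw [this, intervalIntegral.integral_add hint0 hintg,
          intervalIntegral.integral_const_mul]
      have hJ : 0 < ∫ t in t₀..tf, g t := by
        apply intervalIntegral.intervalIntegral_pos_of_pos
          ((contg γ c₁ hc).intervalIntegrable t₀ tf) (fun t => gpos γ hγ c₁ hc t) hlt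
      constructor
      · rw [hsplit]; nlinarith [sq_nonneg c₂]
      · rw [hsplit]
        constructor
        · intro h
          have : c₂ ^ 2 * ∫ t in t₀..tf, g t = 0 := by linarith
          have : c₂ ^ 2 = 0 := by
            rcases mul_eq_zero.mp this with h' | h'
            · exact h'
            · linarith
          exact pow_eq_zero_iff (n := 2) (by norm_num) |>.mp this
        · intro h; rw [h]; ring
    · intro t
      have hb : (0:ℝ) ≤ a * exp tf := by positivity
      have h1 : a * exp tf + exp t ≠ 0 := by positivity
      have h2 : 1 + a * exp tf * exp (-t) ≠ 0 := by positivity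
      rw [Real.exp_neg]
      have hx : Real.exp t ≠ 0 := (Real.exp_pos t).ne'
      field_simp
      ring
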